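/- Let N, p ≥ 2 with gcd(N,p) = 1, m₀ ∈ L^∞(𝕋), m_p(z) := m₀(z^p), and let R₀, R_p be the respective order-N Ruelle operators. Let V₀ = {f ∈ L¹(𝕋) : R₀f = f} and V_p = {f ∈ L¹(𝕋) : R_p f = f}, and let τ_p f(z) = f(e^{2πi/p} z). Then {f ∈ V_p : τ_p f = f} = {f : ∃ h ∈ V₀, f(z) = h(z^p) a.e.}. -/

import Mathlib

open MeasureTheory Filter Set
open scoped Real ENNReal

/-- The Ruelle transfer operator of order `N` with filter `m₀`, on complex
functions on the circle (encoded as `1`-periodic functions on `ℝ`):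
`(Rf)(x) = (1/N) ∑_{k<N} |m₀((x+k)/N)|² f((x+k)/N)`. -/
noncomputable def ruelle (N : ℕ) (m₀ : ℝ → ℂ) (f : ℝ → ℂ) : ℝ → ℂ :=
  fun x => (N : ℂ)⁻¹ *
    ∑ k ∈ Finset.range N, (‖m₀ ((x + k) / N)‖ : ℂ) ^ 2 * f ((x + k) / N)

/-- The Ruelle transfer operator acting on real-valued functions. -/
noncomputable def ruelleR (N : ℕ) (m₀ : ℝ → ℂ) (h : ℝ → ℝ) : ℝ → ℝ :=
  fun x => (N : ℝ)⁻¹ *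
    ∑ k ∈ Finset.range N, ‖m₀ ((x + k) / N)‖ ^ 2 * h ((x + k) / N)

lemma volume_qmp_affine (a b : ℝ) (ha : a ≠ 0) :
    Measure.QuasiMeasurePreserving (fun x : ℝ => a * x + b) volume volume := by
  refine ⟨(measurable_const_mul a).add_const b, ?_⟩
  have h1 : (fun x : ℝ => a * x + b) = (fun x : ℝ => x + b) ∘ (fun x : ℝ => a * x) := rfl
  rw [h1, ← Measure.map_map (measurable_add_const b) (measurable_const_mul a),
    Real.map_volume_mul_left ha, Measure.map_smul,
    (measurePreserving_add_right volume b).map_eq]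
  exact Measure.smul_absolutelyContinuous

lemma aeeq_comp_affine {u v : ℝ → ℂ} (a b : ℝ) (ha : a ≠ 0) (h : u =ᵐ[volume] v) :
    (fun x => u (a * x + b)) =ᵐ[volume] fun x => v (a * x + b) :=
  (volume_qmp_affine a b ha).ae_eq_comp h

lemma aeeq_comp_div {u v : ℝ → ℂ} (a b : ℝ) (ha : a ≠ 0) (h : u =ᵐ[volume] v) :
    (fun x => u ((x + b) / a)) =ᵐ[volume] fun x => v ((x + b) / a) := by
  have e : ∀ w : ℝ → ℂ, (fun x => w ((x + b) / a)) = fun x => w (a⁻¹ * x + b / a) := by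
    intro w; funext x; congr 1; field_simp
  rw [e u, e v]
  exact aeeq_comp_affine a⁻¹ (b / a) (inv_ne_zero ha) h

lemma aeeq_comp_mul {u v : ℝ → ℂ} (a : ℝ) (ha : a ≠ 0) (h : u =ᵐ[volume] v) :
    (fun x => u (a * x)) =ᵐ[volume] fun x => v (a * x) := by
  have e : ∀ w : ℝ → ℂ, (fun x => w (a * x)) = fun x => w (a * x + 0) := by
    intro w; funext x; rw [add_zero]
  rw [e u, e v]
  exact aeeq_comp_affine a 0 ha h

lemma aeeq_comp_add {u v : ℝ → ℂ} (b : ℝ) (h : u =ᵐ[volume] v) :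
    (fun x => u (x + b)) =ᵐ[volume] fun x => v (x + b) := by
  have e : ∀ w : ℝ → ℂ, (fun x => w (x + b)) = fun x => w (1 * x + b) := by
    intro w; funext x; rw [one_mul]
  rw [e u, e v]
  exact aeeq_comp_affine 1 b one_ne_zero h

lemma aeeq_of_comp_mul {u v : ℝ → ℂ} (a : ℝ) (ha : a ≠ 0)
    (h : (fun x => u (a * x)) =ᵐ[volume] fun x => v (a * x)) : u =ᵐ[volume] v := by
  have h2 := aeeq_comp_mul a⁻¹ (inv_ne_zero ha) h
  simpa [mul_inv_cancel_left₀ ha, ← mul_assoc, mul_inv_cancel₀ ha] using h2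


lemma tau_int {f : ℝ → ℂ} {c : ℝ} (h : (fun x => f (x + c)) =ᵐ[volume] f) (m : ℤ) :
    (fun x => f (x + m * c)) =ᵐ[volume] f := by
  have hminus : (fun x => f (x + -c)) =ᵐ[volume] f := by
    have h2 := aeeq_comp_add (-c) h
    have e : (fun x : ℝ => f (x + -c + c)) = f := by funext x; congr 1; ring
    rw [e] at h2
    exact h2.symm
  induction m using Int.induction_on with
  | zero => simp
  | succ n ih =>
      have h1 := aeeq_comp_add c ih
      have e : (fun x : ℝ => f (x + (((n : ℤ) + 1 : ℤ) : ℝ) * c))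
          = fun x => f (x + c + (((n : ℤ) : ℤ) : ℝ) * c) := by
        funext x; congr 1; push_cast; ring
      rw [e]
      exact h1.trans h
  | pred n ih =>
      have h1 := aeeq_comp_add (-c) ih
      have e : (fun x : ℝ => f (x + ((-(n : ℤ) - 1 : ℤ) : ℝ) * c))
          = fun x => f (x + -c + ((-(n : ℤ) : ℤ) : ℝ) * c) := by
        funext x; congr 1; push_cast; ring
      rw [e]
      exact h1.trans hminus

lemma ruelle_congr (N : ℕ) (m : ℝ → ℂ) {u v : ℝ → ℂ} (hN : (N : ℝ) ≠ 0)
    (h : u =ᵐ[volume] v) : ruelle N m u =ᵐ[volume] ruelle N m v := by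
  have H : ∀ k ∈ Finset.range N,
      (fun x : ℝ => u ((x + k) / N)) =ᵐ[volume] fun x => v ((x + k) / N) := fun k _ =>
    aeeq_comp_div (N : ℝ) (k : ℝ) hN h
  have H' : ∀ᵐ x ∂volume, ∀ k ∈ Finset.range N, u ((x + k) / N) = v ((x + k) / N) :=
    (Filter.eventually_all_finset _).mpr H
  filter_upwards [H'] with x hx
  unfold ruelle
  congr 1
  exact Finset.sum_congr rfl fun k hk => by rw [hx k hk]

lemma mod_inv_cancel {N u v : ℕ} (hN : 1 < N) (huv : u * v % N = 1) (a : ℕ) (ha : a < N) :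
    (v * (u * a % N)) % N = a := by
  have c1 : v * (u * a % N) ≡ v * (u * a) [MOD N] := (Nat.mod_modEq _ _).mul_left v
  have c3 : (u * v) * a ≡ 1 * a [MOD N] :=
    Nat.ModEq.mul_right a (by unfold Nat.ModEq; rw [huv, Nat.mod_eq_of_lt hN])
  have key : v * (u * a % N) ≡ a [MOD N] := by
    calc v * (u * a % N) ≡ v * (u * a) [MOD N] := c1
      _ = (u * v) * a := by ring
      _ ≡ 1 * a [MOD N] := c3
      _ = a := one_mul a
  calc (v * (u * a % N)) % N = a % N := key
    _ = a := Nat.mod_eq_of_lt ha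

lemma ruelle_comp (N p : ℕ) (hN : 2 ≤ N) (hcop : Nat.Coprime N p)
    (m₀ h : ℝ → ℂ) (hmper : Function.Periodic m₀ 1) (hhper : Function.Periodic h 1) (x : ℝ) :
    ruelle N (fun y => m₀ (p * y)) (fun y => h (p * y)) x = ruelle N m₀ h ((p : ℝ) * x) := by
  have hN0 : (N : ℝ) ≠ 0 := by positivity
  obtain ⟨q, -, hq⟩ := Nat.exists_mul_mod_eq_one_of_coprime hcop.symm (by omega)
  have hq' : q * p % N = 1 := by rwa [mul_comm] at hq
  set G : ℝ → ℂ := fun y => (‖m₀ y‖ : ℂ) ^ 2 * h y with hGdef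
  have hGper : ∀ (y : ℝ) (d : ℕ), G (y + d) = G y := by
    intro y d
    have h1 := (hmper.nat_mul d) y
    have h2 := (hhper.nat_mul d) y
    simp only [mul_one] at h1 h2
    simp only [hGdef, h1, h2]
  unfold ruelle
  congr 1
  refine Finset.sum_nbij' (i := fun k => (p * k) % N) (j := fun k => (q * k) % N)
    ?_ ?_ ?_ ?_ ?_
  · intro a _; exact Finset.mem_range.mpr (Nat.mod_lt _ (by omega))
  · intro a _; exact Finset.mem_range.mpr (Nat.mod_lt _ (by omega))
  · intro a ha
    exact mod_inv_cancel (by omega) hq a (Finset.mem_range.mp ha)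
  · intro a ha
    exact mod_inv_cancel (by omega) hq' a (Finset.mem_range.mp ha)
  · intro a _
    show G ((p : ℝ) * ((x + a) / N)) = G (((p : ℝ) * x + ((p * a) % N : ℕ)) / N)
    have key : (((p * a) : ℕ) : ℝ)
        = (N : ℝ) * (((p * a) / N : ℕ) : ℝ) + (((p * a) % N : ℕ) : ℝ) := by
      exact_mod_cast (Nat.div_add_mod (p * a) N).symm
    have harg : (p : ℝ) * ((x + a) / N)
        = ((p : ℝ) * x + ((p * a) % N : ℕ)) / N + ((p * a) / N : ℕ) := by
      field_simp
      push_cast at key ⊢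
      linear_combination key
    rw [harg, hGper]

theorem stmt17 (N p : ℕ) (hN : 2 ≤ N) (hp : 2 ≤ p) (hcop : Nat.Coprime N p)
    (m₀ : ℝ → ℂ) (hm : Measurable m₀) (hmper : Function.Periodic m₀ 1)
    (hmb : ∃ C, ∀ᵐ x ∂volume, ‖m₀ x‖ ≤ C)
    (f : ℝ → ℂ) (hfm : Measurable f) (hfper : Function.Periodic f 1)
    (hfi : IntegrableOn f (Set.Ioc (0:ℝ) 1)) :
    (ruelle N (fun x => m₀ (p * x)) f =ᵐ[volume] f ∧
        (fun x => f (x + 1 / p)) =ᵐ[volume] f)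
      ↔ ∃ h : ℝ → ℂ, Measurable h ∧ Function.Periodic h 1 ∧
          IntegrableOn h (Set.Ioc (0:ℝ) 1) ∧
          ruelle N m₀ h =ᵐ[volume] h ∧
          f =ᵐ[volume] fun x => h (p * x) := by
  have hp0 : (p : ℝ) ≠ 0 := by positivity
  have hN0 : (N : ℝ) ≠ 0 := by positivity
  constructor
  · rintro ⟨hR, hτ⟩
    set h : ℝ → ℂ := fun y => f (Int.fract y / p) with hhdef
    have hhm : Measurable h := hfm.comp (measurable_fract.div_const _)
    have hhper : Function.Periodic h 1 := by
      intro y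
      show f (Int.fract (y + 1) / p) = f (Int.fract y / p)
      rw [show (y + 1 : ℝ) = y + ((1 : ℤ) : ℝ) by norm_num, Int.fract_add_intCast]
    have hae : f =ᵐ[volume] fun x => h (p * x) := by
      have hall : ∀ᵐ x ∂volume, ∀ m : ℤ, f (x + (m : ℝ) * (1 / p)) = f x := by
        rw [ae_all_iff]
        intro m
        exact tau_int hτ m
      filter_upwards [hall] with x hx
      show f x = h ((p : ℝ) * x)
      have e1 : Int.fract ((p : ℝ) * x) / p
          = x + ((-⌊(p : ℝ) * x⌋ : ℤ) : ℝ) * (1 / p) := by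
        rw [show Int.fract ((p : ℝ) * x) = (p : ℝ) * x - (⌊(p : ℝ) * x⌋ : ℝ) from
          (Int.self_sub_floor _).symm, Int.cast_neg, sub_div, mul_comm (p : ℝ) x,
          mul_div_assoc, div_self hp0, mul_one, neg_mul, one_div, div_eq_mul_inv,
          sub_eq_add_neg]
      show f x = f (Int.fract ((p : ℝ) * x) / p)
      rw [e1, hx (-⌊(p : ℝ) * x⌋)]
    have hhi : IntegrableOn h (Set.Ioc (0 : ℝ) 1) := by
      have h1p : (0 : ℝ) < 1 / p := by positivity
      have hle : (1 : ℝ) / p ≤ 1 := by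
        rw [div_le_one (by positivity)]
        exact_mod_cast Nat.one_le_iff_ne_zero.mpr (by omega)
      have hsub : IntegrableOn f (Set.Ioc (0 : ℝ) (1 / p)) :=
        hfi.mono_set (Set.Ioc_subset_Ioc le_rfl hle)
      have hii : IntervalIntegrable f volume 0 (1 / p) :=
        (intervalIntegrable_iff_integrableOn_Ioc_of_le h1p.le).mpr hsub
      have hii2 := hii.comp_mul_left (c := (p : ℝ)⁻¹)
      rw [show (0 : ℝ) / (p : ℝ)⁻¹ = 0 by simp,
        show (1 / (p : ℝ)) / (p : ℝ)⁻¹ = 1 by field_simp] at hii2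
      have hI : IntegrableOn (fun y => f ((p : ℝ)⁻¹ * y)) (Set.Ioc (0 : ℝ) 1) :=
        (intervalIntegrable_iff_integrableOn_Ioc_of_le one_pos.le).mp hii2
      rw [IntegrableOn, ← Measure.restrict_congr_set Ioo_ae_eq_Ioc]
      rw [IntegrableOn, ← Measure.restrict_congr_set Ioo_ae_eq_Ioc] at hI
      refine hI.congr ?_
      refine (ae_restrict_iff' measurableSet_Ioo).mpr (Filter.Eventually.of_forall ?_)
      intro y hy
      show f ((p : ℝ)⁻¹ * y) = f (Int.fract y / p)
      rw [Int.fract_eq_self.mpr ⟨hy.1.le, hy.2⟩, div_eq_inv_mul]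
    have hcomp := ruelle_comp N p hN hcop m₀ h hmper hhper
    have s1 : ruelle N (fun y => m₀ ((p : ℝ) * y)) f
        =ᵐ[volume] ruelle N (fun y => m₀ ((p : ℝ) * y)) (fun y => h ((p : ℝ) * y)) :=
      ruelle_congr N _ hN0 hae
    have s2 : (fun x => ruelle N m₀ h ((p : ℝ) * x)) =ᵐ[volume] fun x => h ((p : ℝ) * x) := by
      have s3 : ruelle N (fun y => m₀ ((p : ℝ) * y)) (fun y => h ((p : ℝ) * y))
          = fun x => ruelle N m₀ h ((p : ℝ) * x) := funext hcomp
      have s4 : (fun x => ruelle N m₀ h ((p : ℝ) * x)) =ᵐ[volume] f := by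
        rw [← s3]
        exact s1.symm.trans hR
      exact s4.trans hae
    have hRh : ruelle N m₀ h =ᵐ[volume] h := aeeq_of_comp_mul (p : ℝ) hp0 s2
    exact ⟨h, hhm, hhper, hhi, hRh, hae⟩
  · rintro ⟨h, hhm, hhper, hhi, hRh, hae⟩
    have hcomp := ruelle_comp N p hN hcop m₀ h hmper hhper
    constructor
    · have s1 : ruelle N (fun y => m₀ ((p : ℝ) * y)) f
          =ᵐ[volume] ruelle N (fun y => m₀ ((p : ℝ) * y)) (fun y => h ((p : ℝ) * y)) :=
        ruelle_congr N _ hN0 hae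
      have s3 : ruelle N (fun y => m₀ ((p : ℝ) * y)) (fun y => h ((p : ℝ) * y))
          = fun x => ruelle N m₀ h ((p : ℝ) * x) := funext hcomp
      have s4 : (fun x => ruelle N m₀ h ((p : ℝ) * x)) =ᵐ[volume] fun x => h ((p : ℝ) * x) :=
        aeeq_comp_mul (p : ℝ) hp0 hRh
      calc ruelle N (fun y => m₀ ((p : ℝ) * y)) f
          =ᵐ[volume] ruelle N (fun y => m₀ ((p : ℝ) * y)) (fun y => h ((p : ℝ) * y)) := s1
        _ = fun x => ruelle N m₀ h ((p : ℝ) * x) := s3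
        _ =ᵐ[volume] fun x => h ((p : ℝ) * x) := s4
        _ =ᵐ[volume] f := hae.symm
    · have t1 := aeeq_comp_add (1 / (p : ℝ)) hae
      have t2 : (fun x : ℝ => h ((p : ℝ) * (x + 1 / p))) =ᵐ[volume] fun x => h ((p : ℝ) * x) := by
        refine Filter.Eventually.of_forall fun x => ?_
        show h ((p : ℝ) * (x + 1 / p)) = h ((p : ℝ) * x)
        rw [show (p : ℝ) * (x + 1 / p) = (p : ℝ) * x + 1 by rw [mul_add, mul_one_div, div_self hp0], hhper]
      exact (t1.trans t2).trans hae.symm
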